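/- A finite Gibbs process with Papangelou intensity κ^{(C,ψ)} exists if and only if Z_C(ψ) < ∞; moreover any such process has the explicit distribution Z_C(ψ)^{-1}(1{0∈·} + ∑_{m≥1}(1/m!)∫_{C^m}1{∑δ_{x_j}∈·} κ_m(·,ψ)dλ^m). In particular finite Gibbs processes are unique in distribution. -/

import Mathlib

open MeasureTheory ENNReal

attribute [local instance] Classical.propDecidable

namespace Gibbs

variable {X : Type*} [MeasurableSpace X]

noncomputable def diracSum (l : List X) : Measure X :=
  (l.map fun x => Measure.dirac x).sum

noncomputable def diracSumFin {m : ℕ} (v : Fin m → X) : Measure X :=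
  ∑ i, Measure.dirac (v i)

noncomputable def kappaList (κ : X → Measure X → ℝ≥0∞) : List X → Measure X → ℝ≥0∞
  | [], _ => 1
  | x :: l, μ => κ x (μ + diracSum l) * kappaList κ l μ

noncomputable def kappaFin (κ : X → Measure X → ℝ≥0∞) {m : ℕ}
    (v : Fin m → X) (μ : Measure X) : ℝ≥0∞ :=
  kappaList κ (List.ofFn v) μ

def Cocycle (κ : X → Measure X → ℝ≥0∞) : Prop :=
  ∀ (x y : X) (μ : Measure X),
    κ x μ * κ y (μ + Measure.dirac x) = κ y μ * κ x (μ + Measure.dirac y)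

def IsLocalization (Bseq : ℕ → Set X) : Prop :=
  Monotone Bseq ∧ (∀ j, MeasurableSet (Bseq j)) ∧ (⋃ j, Bseq j) = Set.univ

def IsCounting (Bseq : ℕ → Set X) (μ : Measure X) : Prop :=
  ∀ j, ∃ n : ℕ, μ (Bseq j) = n

structure IsFactorial (fact : Measure X → (m : ℕ) → Measure (Fin m → X)) : Prop where
  one : ∀ μ : Measure X, fact μ 1 = Measure.map (fun x => (fun _ : Fin 1 => x)) μ
  symm : ∀ (μ : Measure X) (m : ℕ) (σ : Equiv.Perm (Fin m)),
    Measure.map (fun v => v ∘ σ) (fact μ m) = fact μ m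
  recur : ∀ (μ : Measure X) (m : ℕ) (A : Set (Fin (m + 1) → X)), MeasurableSet A →
    fact μ (m + 1) A =
      ∫⁻ v, (μ {x | Fin.snoc v x ∈ A}
        - ∑ j : Fin m, Set.indicator A (fun _ => (1 : ℝ≥0∞)) (Fin.snoc v (v j))) ∂ fact μ m

noncomputable def enat (c : ℝ≥0∞) : ℕ := ⌊c.toReal⌋₊

noncomputable def elog (c : ℝ≥0∞) : EReal :=
  if c = 0 then ⊥ else if c = ⊤ then ⊤ else ((Real.log c.toReal : ℝ) : EReal)

noncomputable def eexp (x : EReal) : ℝ≥0∞ :=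
  if x = ⊥ then 0 else if x = ⊤ then ⊤ else ENNReal.ofReal (Real.exp x.toReal)

noncomputable def hamiltonian (κ : X → Measure X → ℝ≥0∞)
    (fact : Measure X → (m : ℕ) → Measure (Fin m → X)) (μ ψ : Measure X) : EReal :=
  if μ Set.univ = 0 then 0
  else if μ Set.univ = ⊤ then ⊤
  else - elog ((((enat (μ Set.univ)).factorial : ℝ≥0∞))⁻¹ *
    ∫⁻ v : Fin (enat (μ Set.univ)) → X, kappaFin κ v ψ ∂ fact μ (enat (μ Set.univ)))

noncomputable def partitionZ (κ : X → Measure X → ℝ≥0∞) (lam : Measure X)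
    (B : Set X) (ψ : Measure X) : ℝ≥0∞ :=
  1 + ∑' m : ℕ, (((m + 1).factorial : ℝ≥0∞))⁻¹ *
    ∫⁻ v : Fin (m + 1) → X, kappaFin κ v ψ ∂(Measure.pi fun _ : Fin (m + 1) => lam.restrict B)

noncomputable def kernelRestrict (κ : X → Measure X → ℝ≥0∞) (C : Set X) (ψ : Measure X) :
    X → Measure X → ℝ≥0∞ :=
  fun x μ => κ x (ψ + μ) * Set.indicator C (fun _ => (1 : ℝ≥0∞)) x

def IsGibbsLaw (κ' : X → Measure X → ℝ≥0∞) (lam : Measure X)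
    (Q : Measure (Measure X)) : Prop :=
  ∀ f : X → Measure X → ℝ≥0∞,
    Measurable (fun p : X × Measure X => f p.1 p.2) →
    ∫⁻ μ, ∫⁻ x, f x μ ∂μ ∂Q
      = ∫⁻ μ, ∫⁻ x, f x (μ + Measure.dirac x) * κ' x μ ∂lam ∂Q

-- basic lemmas
lemma diracSum_ofFn {m : ℕ} (v : Fin m → X) : diracSum (List.ofFn v) = diracSumFin v := by
  simp [diracSum, diracSumFin, List.map_ofFn, List.sum_ofFn, Function.comp]

lemma diracSum_cons (x : X) (l : List X) :
    diracSum (x :: l) = Measure.dirac x + diracSum l := by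
  simp [diracSum]

lemma kappaList_perm {κ : X → Measure X → ℝ≥0∞} (hcoc : Cocycle κ) {l l' : List X}
    (h : l.Perm l') (μ : Measure X) : kappaList κ l μ = kappaList κ l' μ := by
  induction h with
  | nil => rfl
  | @cons x l₁ l₂ h ih =>
      have hd : diracSum l₁ = diracSum l₂ := by
        simp only [diracSum]
        exact List.Perm.sum_eq (List.Perm.map (fun x => Measure.dirac x) h)
      simp only [kappaList, ih, hd]
  | swap x y l =>
      simp only [kappaList, diracSum_cons]
      have h1 : μ + (Measure.dirac x + diracSum l) = (μ + diracSum l) + Measure.dirac x := by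
        abel
      have h2 : μ + (Measure.dirac y + diracSum l) = (μ + diracSum l) + Measure.dirac y := by
        abel
      rw [h1, h2, ← mul_assoc, ← mul_assoc]
      rw [mul_comm (κ y ((μ + diracSum l) + Measure.dirac x)) (κ x (μ + diracSum l))]
      rw [hcoc x y (μ + diracSum l)]
      ring
  | trans h1 h2 ih1 ih2 => rw [ih1, ih2]

lemma kappaFin_comp_perm {κ : X → Measure X → ℝ≥0∞} (hcoc : Cocycle κ) {m : ℕ}
    (σ : Equiv.Perm (Fin m)) (v : Fin m → X) (μ : Measure X) :
    kappaFin κ (v ∘ σ) μ = kappaFin κ v μ := by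
  unfold kappaFin
  refine kappaList_perm hcoc ?_ μ
  have h1 : List.ofFn (v ∘ σ) = (List.ofFn σ).map v := List.map_ofFn.symm
  have h2 : List.ofFn v = (List.ofFn (id : Fin m → Fin m)).map v := by
    rw [List.map_ofFn]; rfl
  rw [h1, h2]
  refine List.Perm.map v ?_
  refine List.perm_of_nodup_nodup_toFinset_eq ?_ ?_ ?_
  · exact (List.nodup_ofFn).2 σ.injective
  · exact (List.nodup_ofFn).2 fun a b h => h
  · have e1 : (List.ofFn σ).toFinset = Finset.univ := by
      apply Finset.eq_univ_of_card
      rw [List.toFinset_card_of_nodup ((List.nodup_ofFn).2 σ.injective)]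
      simp
    have e2 : (List.ofFn (id : Fin m → Fin m)).toFinset = Finset.univ := by
      rw [List.ofFn_id, List.toFinset_finRange]
    rw [e1, e2]

-- structural lemmas for kappaFin / diracSumFin
lemma diracSumFin_zero (v : Fin 0 → X) : diracSumFin v = 0 := by
  simp [diracSumFin]

lemma diracSumFin_snoc {m : ℕ} (v : Fin m → X) (x : X) :
    diracSumFin (Fin.snoc v x) = diracSumFin v + Measure.dirac x := by
  simp [diracSumFin, Fin.sum_univ_castSucc]

lemma diracSumFin_comp_perm {m : ℕ} (σ : Equiv.Perm (Fin m)) (v : Fin m → X) :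
    diracSumFin (v ∘ σ) = diracSumFin v := by
  simp only [diracSumFin, Function.comp]
  exact Equiv.sum_comp σ fun i => Measure.dirac (v i)

lemma kappaFin_zero (κ : X → Measure X → ℝ≥0∞) (v : Fin 0 → X) (μ : Measure X) :
    kappaFin κ v μ = 1 := by
  simp [kappaFin, List.ofFn_zero, kappaList]

lemma kappaFin_succ (κ : X → Measure X → ℝ≥0∞) {m : ℕ} (v : Fin (m + 1) → X) (μ : Measure X) :
    kappaFin κ v μ = κ (v 0) (μ + diracSumFin (v ∘ Fin.succ)) * kappaFin κ (v ∘ Fin.succ) μ := by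
  rw [kappaFin, List.ofFn_succ]
  show kappaList κ (v 0 :: List.ofFn (v ∘ Fin.succ)) μ = _
  rw [kappaList, diracSum_ofFn]
  rfl

lemma kappaFin_cons (κ : X → Measure X → ℝ≥0∞) {m : ℕ} (x : X) (v : Fin m → X) (μ : Measure X) :
    kappaFin κ (Fin.cons x v) μ = κ x (μ + diracSumFin v) * kappaFin κ v μ := by
  rw [kappaFin_succ]
  have h1 : Fin.cons x v ∘ Fin.succ = v := by
    funext i; simp
  rw [h1]
  rfl

lemma kappaFin_snoc {κ : X → Measure X → ℝ≥0∞} (hcoc : Cocycle κ) {m : ℕ}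
    (v : Fin m → X) (x : X) (μ : Measure X) :
    kappaFin κ (Fin.snoc v x) μ = κ x (μ + diracSumFin v) * kappaFin κ v μ := by
  rw [← kappaFin_cons]
  unfold kappaFin
  refine kappaList_perm hcoc ?_ μ
  have h1 : List.ofFn (Fin.snoc v x : Fin (m+1) → X) = List.ofFn v ++ [x] := by
    rw [List.ofFn_succ']
    simp only [Fin.snoc_castSucc, Fin.snoc_last, List.concat_eq_append]
  have h2 : List.ofFn (Fin.cons x v : Fin (m+1) → X) = x :: List.ofFn v := by
    rw [List.ofFn_succ]
    simp
  rw [h1, h2]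
  exact List.perm_append_singleton x (List.ofFn v)

-- measurability
lemma measurable_const_add_measure (ψ : Measure X) :
    Measurable fun μ : Measure X => ψ + μ := by
  refine Measure.measurable_of_measurable_coe _ fun s hs => ?_
  simp only [Measure.add_apply]
  exact measurable_const.add (Measure.measurable_coe hs)

lemma measurable_diracSumFin {m : ℕ} : Measurable (diracSumFin (X := X) (m := m)) := by
  refine Measure.measurable_of_measurable_coe _ fun s hs => ?_
  have : ∀ v : Fin m → X, diracSumFin v s = ∑ i, Set.indicator s (fun _ => (1:ℝ≥0∞)) (v i) := by
    intro v
    rw [diracSumFin, Measure.finset_sum_apply]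
    exact Finset.sum_congr rfl fun i _ => Measure.dirac_apply' _ hs
  simp only [this]
  exact Finset.measurable_sum _ fun i _ =>
    ((measurable_const.indicator hs).comp (measurable_pi_apply i))

lemma measurable_kappaFin {κ : X → Measure X → ℝ≥0∞}
    (hκ : Measurable fun p : X × Measure X => κ p.1 p.2) (ψ : Measure X) :
    ∀ {m : ℕ}, Measurable fun v : Fin m → X => kappaFin κ v ψ := by
  intro m
  induction m with
  | zero => simp only [kappaFin_zero]; exact measurable_const
  | succ n ih =>
      simp only [kappaFin_succ]
      have htail : Measurable fun v : Fin (n+1) → X => v ∘ Fin.succ :=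
        measurable_pi_lambda _ fun i => measurable_pi_apply _
      have h1 : Measurable fun v : Fin (n+1) → X =>
          κ (v 0) (ψ + diracSumFin (v ∘ Fin.succ)) := by
        exact hκ.comp <| (measurable_pi_apply 0).prodMk
          ((measurable_const_add_measure ψ).comp (measurable_diracSumFin.comp htail))
      exact h1.mul (ih.comp htail)

-- finite measures slice machinery
lemma measurable_slice (A : Set (X × Measure X)) (hA : MeasurableSet A) :
    Measurable fun μ : {μ : Measure X // μ Set.univ ≠ ⊤} =>
      (μ : Measure X) {x | (x, (μ : Measure X)) ∈ A} := by
  refine MeasurableSpace.induction_on_inter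
    (C := fun A _ => Measurable fun μ : {μ : Measure X // μ Set.univ ≠ ⊤} =>
      (μ : Measure X) {x | (x, (μ : Measure X)) ∈ A})
    generateFrom_prod.symm isPiSystem_prod ?_ ?_ ?_ ?_ A hA
  · simp only [Set.mem_empty_iff_false, Set.setOf_false, measure_empty]
    exact measurable_const
  · rintro t ⟨s, hs, u, hu, rfl⟩
    have : (fun μ : {μ : Measure X // μ Set.univ ≠ ⊤} =>
        (μ : Measure X) {x | (x, (μ : Measure X)) ∈ s ×ˢ u}) =
        fun μ : {μ : Measure X // μ Set.univ ≠ ⊤} =>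
          Set.indicator u (fun ν => ν s) (μ : Measure X) := by
      funext μ
      by_cases h : (μ : Measure X) ∈ u
      · simp only [Set.indicator_of_mem h]
        congr 1
        ext x
        simp [h]
      · simp only [Set.indicator_of_notMem h]
        have : {x | (x, (μ : Measure X)) ∈ s ×ˢ u} = ∅ := by
          ext x; simp [h]
        rw [this, measure_empty]
    rw [this]
    exact ((Measure.measurable_coe hs).indicator hu).comp measurable_subtype_coe
  · intro t ht hrec
    have hmono : ∀ μ : {μ : Measure X // μ Set.univ ≠ ⊤},
        (μ : Measure X) {x | (x, (μ : Measure X)) ∈ tᶜ} =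
        (μ : Measure X) Set.univ - (μ : Measure X) {x | (x, (μ : Measure X)) ∈ t} := by
      intro μ
      have hsl : MeasurableSet {x | (x, (μ : Measure X)) ∈ t} :=
        ht.preimage (measurable_id.prodMk measurable_const)
      have : {x | (x, (μ : Measure X)) ∈ tᶜ} = {x | (x, (μ : Measure X)) ∈ t}ᶜ := rfl
      rw [this, measure_compl hsl (ne_top_of_le_ne_top μ.2 (measure_mono (Set.subset_univ _)))]
    simp only [hmono]
    exact ((Measure.measurable_coe MeasurableSet.univ).comp measurable_subtype_coe).sub hrec
  · intro g hdisj hg hrec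
    have : ∀ μ : {μ : Measure X // μ Set.univ ≠ ⊤},
        (μ : Measure X) {x | (x, (μ : Measure X)) ∈ ⋃ i, g i} =
        ∑' i, (μ : Measure X) {x | (x, (μ : Measure X)) ∈ g i} := by
      intro μ
      have : {x | (x, (μ : Measure X)) ∈ ⋃ i, g i} =
          ⋃ i, {x | (x, (μ : Measure X)) ∈ g i} := by
        ext x; simp
      rw [this]
      refine measure_iUnion ?_ fun i => (hg i).preimage (measurable_id.prodMk measurable_const)
      intro i j hij
      have := hdisj hij
      rw [Function.onFun, Set.disjoint_iff_forall_ne] at this ⊢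
      intro a ha b hb hab
      exact this ha hb (by rw [hab])
    simp only [this]
    exact Measurable.ennreal_tsum hrec

lemma measurable_lintegral_finite (f : X × Measure X → ℝ≥0∞) (hf : Measurable f) :
    Measurable fun μ : {μ : Measure X // μ Set.univ ≠ ⊤} =>
      ∫⁻ x, f (x, (μ : Measure X)) ∂(μ : Measure X) := by
  have key : ∀ s : SimpleFunc (X × Measure X) ℝ≥0∞,
      Measurable fun μ : {μ : Measure X // μ Set.univ ≠ ⊤} =>
        ∫⁻ x, s (x, (μ : Measure X)) ∂(μ : Measure X) := by
    intro s
    induction s using SimpleFunc.induction with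
    | const c hs =>
        rename_i A
        have : ∀ μ : {μ : Measure X // μ Set.univ ≠ ⊤},
            ∫⁻ x, (SimpleFunc.piecewise A hs (SimpleFunc.const _ c)
              (SimpleFunc.const _ 0)) (x, (μ : Measure X)) ∂(μ : Measure X) =
            c * (μ : Measure X) {x | (x, (μ : Measure X)) ∈ A} := by
          intro μ
          have h1 : ∀ x, (SimpleFunc.piecewise A hs (SimpleFunc.const _ c)
              (SimpleFunc.const _ 0)) (x, (μ : Measure X)) =
              Set.indicator {x | (x, (μ : Measure X)) ∈ A} (fun _ => c) x := by
            intro x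
            simp only [SimpleFunc.coe_piecewise, SimpleFunc.coe_const, Set.piecewise]
            by_cases h : (x, (μ : Measure X)) ∈ A <;>
              simp [h, Set.indicator, Function.const]
          have hsl : MeasurableSet {x | (x, (μ : Measure X)) ∈ A} :=
            hs.preimage (measurable_id.prodMk measurable_const)
          simp only [h1]
          rw [lintegral_indicator hsl]
          simp [Measure.restrict_apply MeasurableSet.univ]
        simp only [this]
        exact measurable_const.mul (measurable_slice A hs)
    | add hfg hf' hg' =>
        rename_i p q
        have : ∀ μ : {μ : Measure X // μ Set.univ ≠ ⊤},
            ∫⁻ x, (p + q) (x, (μ : Measure X)) ∂(μ : Measure X) =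
            (∫⁻ x, p (x, (μ : Measure X)) ∂(μ : Measure X)) +
            ∫⁻ x, q (x, (μ : Measure X)) ∂(μ : Measure X) := by
          intro μ
          simp only [SimpleFunc.coe_add, Pi.add_apply]
          exact lintegral_add_left
            (p.measurable.comp (measurable_id.prodMk measurable_const)) _
        simp only [this]
        exact hf'.add hg'
  have heq : ∀ μ : {μ : Measure X // μ Set.univ ≠ ⊤},
      ∫⁻ x, f (x, (μ : Measure X)) ∂(μ : Measure X) =
      ⨆ n, ∫⁻ x, (SimpleFunc.eapprox f n) (x, (μ : Measure X)) ∂(μ : Measure X) := by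
    intro μ
    calc ∫⁻ x, f (x, (μ : Measure X)) ∂(μ : Measure X)
        = ∫⁻ x, ⨆ n, (SimpleFunc.eapprox f n) (x, (μ : Measure X)) ∂(μ : Measure X) := by
          congr 1; funext x; exact (SimpleFunc.iSup_eapprox_apply hf _).symm
      _ = ⨆ n, ∫⁻ x, (SimpleFunc.eapprox f n) (x, (μ : Measure X)) ∂(μ : Measure X) :=
          lintegral_iSup (fun n => (SimpleFunc.eapprox f n).measurable.comp
            (measurable_id.prodMk measurable_const))
            (fun i j hij x => SimpleFunc.monotone_eapprox f hij _)
  simp only [heq]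
  exact Measurable.iSup fun n => key _

-- modified inner-lintegral functional, measurable
lemma measurableSet_finiteTotal : MeasurableSet {μ : Measure X | μ Set.univ ≠ ⊤} :=
  ((Measure.measurable_coe MeasurableSet.univ) (measurableSet_singleton ⊤)).compl

noncomputable def lintFin (f : X → Measure X → ℝ≥0∞) : Measure X → ℝ≥0∞ :=
  fun μ => if _ : μ ∈ {μ : Measure X | μ Set.univ ≠ ⊤} then ∫⁻ x, f x μ ∂μ else 0

lemma measurable_lintFin {f : X → Measure X → ℝ≥0∞}
    (hf : Measurable fun p : X × Measure X => f p.1 p.2) : Measurable (lintFin f) := by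
  have := Measurable.dite (s := {μ : Measure X | μ Set.univ ≠ ⊤})
    (f := fun μ : {μ : Measure X // μ Set.univ ≠ ⊤} => ∫⁻ x, f x (μ : Measure X) ∂(μ : Measure X))
    (g := fun _ => 0) (measurable_lintegral_finite _ hf) measurable_const
    measurableSet_finiteTotal
  exact this

lemma lintFin_eq {f : X → Measure X → ℝ≥0∞} {μ : Measure X} (h : μ Set.univ ≠ ⊤) :
    lintFin f μ = ∫⁻ x, f x μ ∂μ := dif_pos h

-- sigma-finiteness
lemma sigmaFinite_of_loc {Bseq : ℕ → Set X} (hloc : IsLocalization Bseq) {lam : Measure X}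
    (hlam : ∀ j, lam (Bseq j) ≠ ⊤) : SigmaFinite lam :=
  ⟨⟨⟨fun j => Bseq j, fun _ => trivial, fun j => (hlam j).lt_top, hloc.2.2⟩⟩⟩

-- permutation invariance of pi measures (constant factors)
lemma pi_map_comp_perm {m : ℕ} (ν : Measure X) [SigmaFinite ν] (σ : Equiv.Perm (Fin m)) :
    Measure.map (fun v : Fin m → X => v ∘ σ) (Measure.pi fun _ => ν) =
      Measure.pi fun _ => ν := by
  have hmeas : Measurable fun v : Fin m → X => v ∘ σ :=
    measurable_pi_lambda _ fun i => measurable_pi_apply _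
  refine (Measure.pi_eq fun s hs => ?_).symm
  rw [Measure.map_apply hmeas (MeasurableSet.univ_pi hs)]
  have : (fun v : Fin m → X => v ∘ σ) ⁻¹' Set.univ.pi s =
      Set.univ.pi fun i => s (σ.symm i) := by
    ext v
    constructor
    · intro h i _
      have := h (σ.symm i) (Set.mem_univ _)
      simpa using this
    · intro h i _
      have := h (σ i) (Set.mem_univ _)
      simpa using this
  rw [this, Measure.pi_pi]
  exact Fintype.prod_equiv σ.symm _ _ fun i => rfl

lemma lintegral_pi_comp_perm {m : ℕ} (ν : Measure X) [SigmaFinite ν] (σ : Equiv.Perm (Fin m))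
    {g : (Fin m → X) → ℝ≥0∞} (hg : Measurable g) :
    ∫⁻ v, g (v ∘ σ) ∂(Measure.pi fun _ => ν) = ∫⁻ v, g v ∂(Measure.pi fun _ => ν) := by
  rw [← lintegral_map hg (measurable_pi_lambda _ fun i => measurable_pi_apply _),
    pi_map_comp_perm ν σ]

-- splitting off the last coordinate
lemma lintegral_pi_succ {m : ℕ} (ν : Measure X) [SigmaFinite ν]
    {g : (Fin (m + 1) → X) → ℝ≥0∞} (hg : Measurable g) :
    ∫⁻ v, g v ∂(Measure.pi fun _ : Fin (m + 1) => ν) =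
      ∫⁻ x, ∫⁻ w, g (Fin.snoc w x) ∂(Measure.pi fun _ : Fin m => ν) ∂ν := by
  have hmp := (measurePreserving_piFinSuccAbove (fun _ : Fin (m + 1) => ν) (Fin.last m)).symm
  rw [← hmp.lintegral_comp hg]
  have hmeas : AEMeasurable (fun a : X × (Fin m → X) =>
      g ((MeasurableEquiv.piFinSuccAbove (fun _ : Fin (m+1) => X) (Fin.last m)).symm a))
      (ν.prod (Measure.pi fun _ : Fin m => ν)) :=
    (hg.comp hmp.measurable).aemeasurable
  rw [lintegral_prod _ hmeas]
  refine lintegral_congr fun x => lintegral_congr fun w => ?_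
  congr 1
  show Fin.insertNth (α := fun _ : Fin (m+1) => X) (Fin.last m) x w = _
  rw [Fin.insertNth_last']

section Core

variable {κ : X → Measure X → ℝ≥0∞} (ψ : Measure X) (ν : Measure X)

noncomputable def piC (ν : Measure X) (m : ℕ) : Measure (Fin m → X) :=
  Measure.pi fun _ => ν

noncomputable def Bint (κ : X → Measure X → ℝ≥0∞) (ψ ν : Measure X)
    (g : Measure X → ℝ≥0∞) (m : ℕ) : ℝ≥0∞ :=
  ∫⁻ v : Fin m → X, g (diracSumFin v) * kappaFin κ v ψ ∂piC ν m

instance piC_sigmaFinite (ν : Measure X) [SigmaFinite ν] (m : ℕ) :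
    SigmaFinite (piC ν m) := by
  unfold piC; infer_instance

lemma Bint_zero (g : Measure X → ℝ≥0∞) : Bint κ ψ ν g 0 = g 0 := by
  unfold Bint piC
  rw [Measure.pi_of_empty]
  rw [lintegral_dirac' _ (Subsingleton.measurable)]
  rw [diracSumFin_zero, kappaFin_zero, mul_one]

variable [SigmaFinite ν]

lemma Bint_succ (hκmeas : Measurable fun p : X × Measure X => κ p.1 p.2)
    (hcoc : Cocycle κ) {m : ℕ}
    {F : X → Measure X → ℝ≥0∞} (hF : Measurable fun p : X × Measure X => F p.1 p.2) :
    ∫⁻ v : Fin (m + 1) → X, F (v (Fin.last m)) (diracSumFin v) * kappaFin κ v ψ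
        ∂piC ν (m + 1) =
      ∫⁻ x, ∫⁻ w : Fin m → X,
        F x (diracSumFin w + Measure.dirac x) * κ x (ψ + diracSumFin w) * kappaFin κ w ψ
        ∂piC ν m ∂ν := by
  have hg : Measurable fun v : Fin (m+1) → X =>
      F (v (Fin.last m)) (diracSumFin v) * kappaFin κ v ψ :=
    (hF.comp ((measurable_pi_apply _).prodMk measurable_diracSumFin)).mul
      (measurable_kappaFin hκmeas ψ)
  unfold piC
  rw [lintegral_pi_succ ν hg]
  refine lintegral_congr fun x => lintegral_congr fun w => ?_
  rw [Fin.snoc_last, diracSumFin_snoc, kappaFin_snoc hcoc, mul_assoc]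

lemma Bint_symm (hκmeas : Measurable fun p : X × Measure X => κ p.1 p.2)
    (hcoc : Cocycle κ) {m : ℕ}
    {F : X → Measure X → ℝ≥0∞} (hF : Measurable fun p : X × Measure X => F p.1 p.2) :
    ∫⁻ v : Fin (m + 1) → X, (∑ i, F (v i) (diracSumFin v)) * kappaFin κ v ψ
        ∂piC ν (m + 1) =
      (m + 1 : ℝ≥0∞) *
        ∫⁻ v : Fin (m + 1) → X, F (v (Fin.last m)) (diracSumFin v) * kappaFin κ v ψ
          ∂piC ν (m + 1) := by
  have hterm : ∀ i : Fin (m+1), Measurable fun v : Fin (m+1) → X =>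
      F (v i) (diracSumFin v) * kappaFin κ v ψ := fun i =>
    (hF.comp ((measurable_pi_apply _).prodMk measurable_diracSumFin)).mul
      (measurable_kappaFin hκmeas ψ)
  have h1 : ∀ v : Fin (m+1) → X, (∑ i, F (v i) (diracSumFin v)) * kappaFin κ v ψ =
      ∑ i, F (v i) (diracSumFin v) * kappaFin κ v ψ := fun v => Finset.sum_mul _ _ _
  rw [lintegral_congr h1, lintegral_finset_sum _ (fun i _ => hterm i)]
  have h2 : ∀ i : Fin (m+1),
      ∫⁻ v : Fin (m+1) → X, F (v i) (diracSumFin v) * kappaFin κ v ψ ∂piC ν (m+1) =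
      ∫⁻ v : Fin (m+1) → X, F (v (Fin.last m)) (diracSumFin v) * kappaFin κ v ψ
        ∂piC ν (m+1) := by
    intro i
    unfold piC
    have := lintegral_pi_comp_perm (m := m+1) ν (Equiv.swap i (Fin.last m))
      (g := fun v => F (v (Fin.last m)) (diracSumFin v) * kappaFin κ v ψ)
      (hterm (Fin.last m))
    simp only [] at this
    rw [← this]
    refine lintegral_congr fun v => ?_
    rw [diracSumFin_comp_perm, kappaFin_comp_perm hcoc]
    have : (v ∘ (Equiv.swap i (Fin.last m))) (Fin.last m) = v i := by
      simp [Equiv.swap_apply_right]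
    rw [this]
  simp only [h2]
  rw [Finset.sum_const, Finset.card_univ, Fintype.card_fin]
  simp [nsmul_eq_mul]

end Core

section Explicit

variable (κ : X → Measure X → ℝ≥0∞) (ψ ν : Measure X)

noncomputable def Qm (m : ℕ) : Measure (Measure X) :=
  Measure.map diracSumFin ((piC ν m).withDensity fun v => kappaFin κ v ψ)

noncomputable def Qexp : Measure (Measure X) :=
  Measure.dirac 0 + Measure.sum fun m : ℕ =>
    (((m + 1).factorial : ℝ≥0∞))⁻¹ • Qm κ ψ ν (m + 1)

variable {κ}

lemma lintegral_Qm (hκmeas : Measurable fun p : X × Measure X => κ p.1 p.2)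
    {g : Measure X → ℝ≥0∞} (hg : Measurable g) (m : ℕ) :
    ∫⁻ μ, g μ ∂Qm κ ψ ν m = Bint κ ψ ν g m := by
  unfold Qm Bint
  rw [lintegral_map hg measurable_diracSumFin]
  have h2 := lintegral_withDensity_eq_lintegral_mul (piC ν m)
    (measurable_kappaFin hκmeas ψ) (g := fun v => g (diracSumFin v))
    (hg.comp measurable_diracSumFin)
  rw [h2]
  exact lintegral_congr fun v => mul_comm _ _

lemma lintegral_Qexp (hκmeas : Measurable fun p : X × Measure X => κ p.1 p.2)
    {g : Measure X → ℝ≥0∞} (hg : Measurable g) :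
    ∫⁻ μ, g μ ∂Qexp κ ψ ν =
      ∑' m : ℕ, ((m.factorial : ℝ≥0∞))⁻¹ * Bint κ ψ ν g m := by
  unfold Qexp
  rw [lintegral_add_measure, lintegral_dirac' _ hg, lintegral_sum_measure]
  have : ∀ m : ℕ, ∫⁻ μ, g μ ∂((((m + 1).factorial : ℝ≥0∞))⁻¹ • Qm κ ψ ν (m + 1)) =
      (((m + 1).factorial : ℝ≥0∞))⁻¹ * Bint κ ψ ν g (m + 1) := by
    intro m
    rw [lintegral_smul_measure, lintegral_Qm ψ ν hκmeas hg, smul_eq_mul]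
  rw [tsum_congr this]
  conv_rhs => rw [tsum_eq_zero_add' ENNReal.summable]
  rw [Nat.factorial_zero, Nat.cast_one, inv_one, one_mul, Bint_zero]

lemma Qexp_apply (hκmeas : Measurable fun p : X × Measure X => κ p.1 p.2)
    {A : Set (Measure X)} (hA : MeasurableSet A) :
    Qexp κ ψ ν A =
      Set.indicator A (fun _ => (1 : ℝ≥0∞)) (0 : Measure X)
        + ∑' m : ℕ, (((m + 1).factorial : ℝ≥0∞))⁻¹ *
            ∫⁻ v : Fin (m + 1) → X,
              Set.indicator A (fun _ => (1 : ℝ≥0∞)) (diracSumFin v) * kappaFin κ v ψ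
            ∂piC ν (m + 1) := by
  have hg : Measurable (Set.indicator A (fun _ => (1 : ℝ≥0∞))) :=
    measurable_const.indicator hA
  have h1 : Qexp κ ψ ν A = ∫⁻ μ, Set.indicator A (fun _ => (1:ℝ≥0∞)) μ ∂Qexp κ ψ ν := by
    rw [lintegral_indicator hA, setLIntegral_const, one_mul]
  rw [h1, lintegral_Qexp ψ ν hκmeas hg]
  conv_lhs => rw [tsum_eq_zero_add' ENNReal.summable]
  rw [Nat.factorial_zero, Nat.cast_one, inv_one, one_mul, Bint_zero]
  rfl

lemma measurable_add_dirac : Measurable fun p : Measure X × X => p.1 + Measure.dirac p.2 := by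
  refine Measure.measurable_of_measurable_coe _ fun s hs => ?_
  have : ∀ p : Measure X × X, (p.1 + Measure.dirac p.2) s =
      p.1 s + Set.indicator s (fun _ => (1:ℝ≥0∞)) p.2 := by
    intro p
    rw [Measure.add_apply, Measure.dirac_apply' _ hs]
    rfl
  simp only [this]
  exact ((Measure.measurable_coe hs).comp measurable_fst).add
    ((measurable_const.indicator hs).comp measurable_snd)

lemma diracSumFin_apply {m : ℕ} (v : Fin m → X) {s : Set X} (hs : MeasurableSet s) :
    diracSumFin v s = ((Finset.univ.filter fun i => v i ∈ s).card : ℝ≥0∞) := by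
  rw [diracSumFin, Measure.finset_sum_apply]
  have : ∀ i : Fin m, Measure.dirac (v i) s = if v i ∈ s then (1:ℝ≥0∞) else 0 := by
    intro i
    rw [Measure.dirac_apply' _ hs]
    simp [Set.indicator]
  rw [Finset.sum_congr rfl fun i _ => this i]
  simp [Finset.sum_boole]

lemma diracSumFin_univ {m : ℕ} (v : Fin m → X) :
    diracSumFin v Set.univ = (m : ℝ≥0∞) := by
  rw [diracSumFin_apply v MeasurableSet.univ]
  simp

lemma Qexp_null {κ : X → Measure X → ℝ≥0∞} {ψ ν : Measure X} {S : Set (Measure X)}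
    (hS : MeasurableSet S) (h0 : (0 : Measure X) ∉ S)
    (hD : ∀ (m : ℕ) (v : Fin (m + 1) → X), diracSumFin v ∉ S) :
    Qexp κ ψ ν S = 0 := by
  unfold Qexp
  rw [Measure.add_apply, Measure.sum_apply _ hS]
  have h1 : Measure.dirac (0 : Measure X) S = 0 := by
    rw [Measure.dirac_apply' _ hS]
    simp [h0]
  have h2 : ∀ m : ℕ, ((((m + 1).factorial : ℝ≥0∞))⁻¹ • Qm κ ψ ν (m + 1)) S = 0 := by
    intro m
    rw [Measure.smul_apply, smul_eq_mul]
    unfold Qm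
    rw [Measure.map_apply measurable_diracSumFin hS]
    have : diracSumFin ⁻¹' S = (∅ : Set (Fin (m+1) → X)) := by
      ext v; simp [hD m v]
    rw [this, measure_empty, mul_zero]
  simp [h1, h2]

lemma fact_arith (m : ℕ) (a : ℝ≥0∞) :
    (((m + 1).factorial : ℝ≥0∞))⁻¹ * (((m : ℝ≥0∞) + 1) * a) =
      ((m.factorial : ℝ≥0∞))⁻¹ * a := by
  have h1 : ((m + 1).factorial : ℝ≥0∞) = ((m : ℝ≥0∞) + 1) * (m.factorial : ℝ≥0∞) := by
    rw [Nat.factorial_succ]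
    push_cast
    ring
  rw [h1, ENNReal.mul_inv (Or.inl (by simp)) (Or.inl (by simp))]
  rw [← mul_assoc, mul_comm (((m : ℝ≥0∞) + 1))⁻¹ _, mul_assoc ((m.factorial : ℝ≥0∞))⁻¹,
    ENNReal.inv_mul_cancel (by simp) (by simp), mul_one]

lemma lintFin_diracSumFin {f : X → Measure X → ℝ≥0∞}
    (hf : Measurable fun p : X × Measure X => f p.1 p.2) {m : ℕ} (v : Fin m → X) :
    lintFin f (diracSumFin v) = ∑ i, f (v i) (diracSumFin v) := by
  have hfin : diracSumFin v Set.univ ≠ ⊤ := by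
    rw [diracSumFin_univ]; exact ENNReal.natCast_ne_top m
  rw [lintFin_eq hfin]
  rw [diracSumFin, lintegral_finset_sum_measure]
  exact Finset.sum_congr rfl fun i _ =>
    lintegral_dirac' _ (hf.comp (measurable_id.prodMk measurable_const))

lemma lintFin_zero {f : X → Measure X → ℝ≥0∞} : lintFin f (0 : Measure X) = 0 := by
  rw [lintFin_eq (by simp)]
  simp

lemma Bint_succ_eq {κ : X → Measure X → ℝ≥0∞}
    (hκmeas : Measurable fun p : X × Measure X => κ p.1 p.2) (hcoc : Cocycle κ)
    (ψ ν : Measure X) [SigmaFinite ν]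
    {f : X → Measure X → ℝ≥0∞} (hf : Measurable fun p : X × Measure X => f p.1 p.2)
    (m : ℕ) :
    ∫⁻ v : Fin (m + 1) → X, f (v (Fin.last m)) (diracSumFin v) * kappaFin κ v ψ
        ∂piC ν (m + 1) =
      Bint κ ψ ν (fun μ => ∫⁻ x, f x (μ + Measure.dirac x) * κ x (ψ + μ) ∂ν) m := by
  have hswapmeas : AEMeasurable (Function.uncurry fun (x : X) (w : Fin m → X) =>
      f x (diracSumFin w + Measure.dirac x) * κ x (ψ + diracSumFin w) * kappaFin κ w ψ)
      (ν.prod (piC ν m)) := by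
    refine Measurable.aemeasurable ?_
    refine Measurable.mul (Measurable.mul ?_ ?_) ?_
    · exact hf.comp (measurable_fst.prodMk
        (measurable_add_dirac.comp ((measurable_diracSumFin.comp measurable_snd).prodMk
          measurable_fst)))
    · exact hκmeas.comp (measurable_fst.prodMk
        ((measurable_const_add_measure ψ).comp (measurable_diracSumFin.comp measurable_snd)))
    · exact (measurable_kappaFin hκmeas ψ).comp measurable_snd
  rw [Bint_succ ψ ν hκmeas hcoc hf]
  rw [lintegral_lintegral_swap hswapmeas]
  unfold Bint
  refine lintegral_congr fun w => ?_
  have hm : Measurable fun x : X =>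
      f x (diracSumFin w + Measure.dirac x) * κ x (ψ + diracSumFin w) := by
    refine Measurable.mul ?_ ?_
    · exact hf.comp (measurable_id.prodMk
        (measurable_add_dirac.comp (measurable_const.prodMk measurable_id)))
    · exact hκmeas.comp (measurable_id.prodMk measurable_const)
  rw [lintegral_mul_const _ hm]

theorem gnz_Qexp {κ : X → Measure X → ℝ≥0∞}
    (hκmeas : Measurable fun p : X × Measure X => κ p.1 p.2) (hcoc : Cocycle κ)
    (ψ ν : Measure X) [SigmaFinite ν]
    {f : X → Measure X → ℝ≥0∞} (hf : Measurable fun p : X × Measure X => f p.1 p.2) :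
    ∫⁻ μ, ∫⁻ x, f x μ ∂μ ∂Qexp κ ψ ν
      = ∫⁻ μ, ∫⁻ x, f x (μ + Measure.dirac x) * κ x (ψ + μ) ∂ν ∂Qexp κ ψ ν := by
  have hRm : Measurable fun μ : Measure X =>
      ∫⁻ x, f x (μ + Measure.dirac x) * κ x (ψ + μ) ∂ν := by
    refine Measurable.lintegral_prod_right' (f := fun p : Measure X × X =>
      f p.2 (p.1 + Measure.dirac p.2) * κ p.2 (ψ + p.1)) ?_
    exact ((hf.comp (measurable_snd.prodMk measurable_add_dirac)).mul
      (hκmeas.comp (measurable_snd.prodMk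
        ((measurable_const_add_measure ψ).comp measurable_fst))))
  have hae : (fun μ : Measure X => ∫⁻ x, f x μ ∂μ) =ᵐ[Qexp κ ψ ν] lintFin f := by
    have hnull : Qexp κ ψ ν {μ : Measure X | μ Set.univ ≠ ⊤}ᶜ = 0 := by
      refine Qexp_null measurableSet_finiteTotal.compl ?_ ?_
      · simp
      · intro m v
        simp only [Set.mem_compl_iff, Set.mem_setOf_eq, not_not]
        rw [diracSumFin_univ]
        exact ENNReal.natCast_ne_top (m+1)
    refine Filter.eventuallyEq_of_mem (s := {μ : Measure X | μ Set.univ ≠ ⊤}) ?_ ?_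
    · rw [mem_ae_iff]; exact hnull
    · intro μ hμ
      exact (lintFin_eq hμ).symm
  rw [lintegral_congr_ae hae]
  rw [lintegral_Qexp ψ ν hκmeas (measurable_lintFin hf),
    lintegral_Qexp ψ ν hκmeas hRm]
  conv_lhs => rw [tsum_eq_zero_add' ENNReal.summable]
  have hB0 : Bint κ ψ ν (lintFin f) 0 = 0 := by
    rw [Bint_zero]; exact lintFin_zero
  rw [hB0, mul_zero, zero_add]
  refine tsum_congr fun m => ?_
  have hstep1 : Bint κ ψ ν (lintFin f) (m + 1) =
      ((m : ℝ≥0∞) + 1) * ∫⁻ v : Fin (m+1) → X,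
        f (v (Fin.last m)) (diracSumFin v) * kappaFin κ v ψ ∂piC ν (m+1) := by
    unfold Bint
    have : ∀ v : Fin (m+1) → X, lintFin f (diracSumFin v) * kappaFin κ v ψ =
        (∑ i, f (v i) (diracSumFin v)) * kappaFin κ v ψ := by
      intro v; rw [lintFin_diracSumFin hf]
    rw [lintegral_congr this, Bint_symm ψ ν hκmeas hcoc hf]
  rw [hstep1, Bint_succ_eq hκmeas hcoc ψ ν hf m, fact_arith]

lemma lint_mul_indicator_restrict {lam : Measure X} {C : Set X} (hC : MeasurableSet C)
    (g : X → ℝ≥0∞) :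
    ∫⁻ x, g x * Set.indicator C (fun _ => (1 : ℝ≥0∞)) x ∂lam = ∫⁻ x, g x ∂lam.restrict C := by
  have : (fun x => g x * Set.indicator C (fun _ => (1 : ℝ≥0∞)) x) = Set.indicator C g := by
    funext x
    by_cases h : x ∈ C <;> simp [Set.indicator, h]
  rw [this, lintegral_indicator hC]

lemma Qexp_univ {κ : X → Measure X → ℝ≥0∞}
    (hκmeas : Measurable fun p : X × Measure X => κ p.1 p.2)
    (ψ : Measure X) (lam : Measure X) (C : Set X) :
    Qexp κ ψ (lam.restrict C) Set.univ = partitionZ κ lam C ψ := by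
  rw [Qexp_apply ψ (lam.restrict C) hκmeas MeasurableSet.univ]
  unfold partitionZ
  simp only [Set.indicator_univ]
  congr 1
  refine tsum_congr fun m => ?_
  congr 1
  exact lintegral_congr fun v => one_mul _

lemma goodSet_measurable {Bseq : ℕ → Set X} (hloc : IsLocalization Bseq) :
    MeasurableSet {μ : Measure X | IsCounting Bseq μ ∧ μ Set.univ < ⊤} := by
  have h1 : {μ : Measure X | IsCounting Bseq μ ∧ μ Set.univ < ⊤} =
      (⋂ j, ⋃ n : ℕ, {μ : Measure X | μ (Bseq j) = (n : ℝ≥0∞)}) ∩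
        {μ : Measure X | μ Set.univ < ⊤} := by
    ext μ
    simp [IsCounting, Set.mem_iInter, Set.mem_iUnion]
  rw [h1]
  refine MeasurableSet.inter ?_ ?_
  · refine MeasurableSet.iInter fun j => MeasurableSet.iUnion fun n => ?_
    exact (Measure.measurable_coe (hloc.2.1 j)) (measurableSet_singleton _)
  · exact measurableSet_lt (Measure.measurable_coe MeasurableSet.univ) measurable_const

lemma zero_mem_good {Bseq : ℕ → Set X} :
    (0 : Measure X) ∈ {μ : Measure X | IsCounting Bseq μ ∧ μ Set.univ < ⊤} := by
  constructor
  · intro j; exact ⟨0, by simp⟩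
  · simp

lemma diracSumFin_mem_good {Bseq : ℕ → Set X} (hloc : IsLocalization Bseq)
    {m : ℕ} (v : Fin m → X) :
    diracSumFin v ∈ {μ : Measure X | IsCounting Bseq μ ∧ μ Set.univ < ⊤} := by
  constructor
  · intro j
    exact ⟨_, diracSumFin_apply v (hloc.2.1 j)⟩
  · rw [diracSumFin_univ]
    exact ENNReal.natCast_lt_top m

theorem exists_gibbs_of_partitionZ_lt {Bseq : ℕ → Set X} (hloc : IsLocalization Bseq)
    {lam : Measure X} (hlam : ∀ j, lam (Bseq j) ≠ ⊤)
    {κ : X → Measure X → ℝ≥0∞}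
    (hκmeas : Measurable fun p : X × Measure X => κ p.1 p.2)
    (hcoc : Cocycle κ) {C : Set X} (hC : MeasurableSet C) (ψ : Measure X)
    (hZ : partitionZ κ lam C ψ < ⊤) :
    ∃ Q : Measure (Measure X), IsProbabilityMeasure Q ∧
      IsGibbsLaw (kernelRestrict κ C ψ) lam Q ∧
      (∀ᵐ μ ∂Q, IsCounting Bseq μ ∧ μ Set.univ < ⊤) := by
  haveI : SigmaFinite lam := sigmaFinite_of_loc hloc hlam
  set ν := lam.restrict C with hν
  set Z := partitionZ κ lam C ψ with hZdef
  have hZ0 : Z ≠ 0 := by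
    have : (1 : ℝ≥0∞) ≤ Z := le_self_add
    intro h; rw [h] at this; simp at this
  refine ⟨Z⁻¹ • Qexp κ ψ ν, ?_, ?_, ?_⟩
  · constructor
    rw [Measure.smul_apply, smul_eq_mul, Qexp_univ hκmeas ψ lam C, ← hZdef]
    exact ENNReal.inv_mul_cancel hZ0 hZ.ne
  · intro f hf
    rw [lintegral_smul_measure, lintegral_smul_measure]
    congr 1
    rw [gnz_Qexp hκmeas hcoc ψ ν hf]
    refine lintegral_congr fun μ => ?_
    unfold kernelRestrict
    rw [← lint_mul_indicator_restrict hC fun x => f x (μ + Measure.dirac x) * κ x (ψ + μ)]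
    exact lintegral_congr fun x => mul_assoc _ _ _
  · have hnull : Qexp κ ψ ν {μ : Measure X | IsCounting Bseq μ ∧ μ Set.univ < ⊤}ᶜ = 0 := by
      refine Qexp_null (goodSet_measurable hloc).compl ?_ ?_
      · simp only [Set.mem_compl_iff, not_not]
        exact zero_mem_good
      · intro m v
        simp only [Set.mem_compl_iff, not_not]
        exact diracSumFin_mem_good hloc v
    rw [ae_iff]
    have : {μ : Measure X | ¬(IsCounting Bseq μ ∧ μ Set.univ < ⊤)} =
        {μ : Measure X | IsCounting Bseq μ ∧ μ Set.univ < ⊤}ᶜ := rfl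
    rw [this, Measure.smul_apply, hnull, smul_eq_mul, mul_zero]

lemma succ_ne_top (m : ℕ) : ((m : ℝ≥0∞) + 1) ≠ ⊤ :=
  ENNReal.add_ne_top.mpr ⟨ENNReal.natCast_ne_top m, ENNReal.one_ne_top⟩

lemma inv_succ_mul (m : ℕ) (c d : ℝ≥0∞) :
    ((m : ℝ≥0∞) + 1)⁻¹ * (c * ((m.factorial : ℝ≥0∞))⁻¹ * d) =
      c * (((m + 1).factorial : ℝ≥0∞))⁻¹ * d := by
  have h1 : ((m + 1).factorial : ℝ≥0∞) = ((m : ℝ≥0∞) + 1) * (m.factorial : ℝ≥0∞) := by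
    rw [Nat.factorial_succ]; push_cast; ring
  rw [h1, ENNReal.mul_inv (Or.inl (by simp)) (Or.inl (by simp))]
  ring

lemma exists_nat_total {Bseq : ℕ → Set X} (hloc : IsLocalization Bseq) {μ : Measure X}
    (hcnt : IsCounting Bseq μ) (hfin : μ Set.univ < ⊤) : ∃ n : ℕ, μ Set.univ = n := by
  have hu : μ Set.univ = ⨆ j, μ (Bseq j) := by
    rw [← hloc.2.2]
    exact hloc.1.measure_iUnion
  choose n hn using hcnt
  have hb : ∀ j, (n j : ℝ≥0∞) ≤ μ Set.univ := fun j =>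
    (hn j) ▸ measure_mono (Set.subset_univ _)
  have hbdd : BddAbove (Set.range n) := by
    refine ⟨⌊(μ Set.univ).toReal⌋₊, ?_⟩
    rintro k ⟨j, rfl⟩
    rw [Nat.le_floor_iff ENNReal.toReal_nonneg]
    calc (n j : ℝ) = ((n j : ℝ≥0∞)).toReal := by simp
      _ ≤ (μ Set.univ).toReal := ENNReal.toReal_mono hfin.ne (hb j)
  obtain ⟨j0, hj0⟩ := Nat.sSup_mem (Set.range_nonempty n) hbdd
  refine ⟨sSup (Set.range n), le_antisymm ?_ ?_⟩
  · rw [hu]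
    refine iSup_le fun j => ?_
    rw [hn j]
    exact Nat.cast_le.mpr (le_csSup hbdd (Set.mem_range_self j))
  · calc ((sSup (Set.range n) : ℕ) : ℝ≥0∞) = (n j0 : ℝ≥0∞) := by rw [hj0]
      _ = μ (Bseq j0) := (hn j0).symm
      _ ≤ μ Set.univ := measure_mono (Set.subset_univ _)

theorem gibbs_key {Bseq : ℕ → Set X} (hloc : IsLocalization Bseq)
    {lam : Measure X} (hlam : ∀ j, lam (Bseq j) ≠ ⊤)
    {κ : X → Measure X → ℝ≥0∞}
    (hκmeas : Measurable fun p : X × Measure X => κ p.1 p.2)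
    (hcoc : Cocycle κ) {C : Set X} (hC : MeasurableSet C) (ψ : Measure X)
    (Q : Measure (Measure X)) (hQ : IsProbabilityMeasure Q)
    (hG : IsGibbsLaw (kernelRestrict κ C ψ) lam Q)
    (hae : ∀ᵐ μ ∂Q, IsCounting Bseq μ ∧ μ Set.univ < ⊤) :
    partitionZ κ lam C ψ < ⊤ ∧
      ∀ A : Set (Measure X), MeasurableSet A →
        Q A = (partitionZ κ lam C ψ)⁻¹ *
          (Set.indicator A (fun _ => (1 : ℝ≥0∞)) (0 : Measure X)
            + ∑' m : ℕ, (((m + 1).factorial : ℝ≥0∞))⁻¹ *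
                ∫⁻ v : Fin (m + 1) → X,
                  Set.indicator A (fun _ => (1 : ℝ≥0∞)) (diracSumFin v) * kappaFin κ v ψ
                ∂(Measure.pi fun _ : Fin (m + 1) => lam.restrict C)) := by
  haveI : SigmaFinite lam := sigmaFinite_of_loc hloc hlam
  set ν := lam.restrict C with hν
  set S : ℕ → Set (Measure X) := fun m => {μ : Measure X | μ Set.univ = (m : ℝ≥0∞)}
    with hSdef
  have hSmeas : ∀ m, MeasurableSet (S m) := fun m =>
    (Measure.measurable_coe MeasurableSet.univ) (measurableSet_singleton _)
  set c := Q (S 0) with hcdef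
  -- the inductive formula
  have key : ∀ (m : ℕ) (g : Measure X → ℝ≥0∞), Measurable g →
      ∫⁻ μ in S m, g μ ∂Q = c * ((m.factorial : ℝ≥0∞))⁻¹ * Bint κ ψ ν g m := by
    intro m
    induction m with
    | zero =>
        intro g hg
        have h0 : ∀ᵐ μ ∂Q, μ ∈ S 0 → g μ = g 0 := by
          refine Filter.Eventually.of_forall fun μ hμ => ?_
          have : μ Set.univ = 0 := by simpa [hSdef] using hμ
          rw [Measure.measure_univ_eq_zero.mp this]
        rw [setLIntegral_congr_fun_ae (hSmeas 0) h0, setLIntegral_const, Bint_zero]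
        simp [mul_comm, hcdef]
    | succ m ih =>
        intro g hg
        -- GNZ with a tailored f
        set f : X → Measure X → ℝ≥0∞ := fun _ μ' =>
          Set.indicator (S (m+1)) (fun _ => (1:ℝ≥0∞)) μ' * g μ' with hfdef
        have hfmeas : Measurable fun p : X × Measure X => f p.1 p.2 :=
          ((measurable_const.indicator (hSmeas (m+1))).comp measurable_snd).mul
            (hg.comp measurable_snd)
        have hgnz := hG f hfmeas
        -- LHS
        have hL : ∫⁻ μ, ∫⁻ x, f x μ ∂μ ∂Q =
            ((m : ℝ≥0∞) + 1) * ∫⁻ μ in S (m+1), g μ ∂Q := by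
          have h1 : ∀ μ : Measure X, ∫⁻ x, f x μ ∂μ =
              Set.indicator (S (m+1)) (fun μ' => ((m : ℝ≥0∞) + 1) * g μ') μ := by
            intro μ
            rw [hfdef]
            simp only []
            rw [lintegral_const]
            by_cases h : μ ∈ S (m+1)
            · have hμu : μ Set.univ = (m : ℝ≥0∞) + 1 := by
                have := h
                simp only [hSdef, Set.mem_setOf_eq] at this
                rw [this]; push_cast; ring
              rw [Set.indicator_of_mem h, Set.indicator_of_mem h, hμu, one_mul]
              ring
            · rw [Set.indicator_of_notMem h, Set.indicator_of_notMem h,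
                zero_mul, zero_mul]
          rw [lintegral_congr h1, lintegral_indicator (hSmeas (m+1)),
            lintegral_const_mul' _ _ (succ_ne_top m)]
        -- RHS
        set Rg : Measure X → ℝ≥0∞ := fun μ =>
          ∫⁻ x, g (μ + Measure.dirac x) * κ x (ψ + μ) ∂ν with hRgdef
        have hRgmeas : Measurable Rg := by
          refine Measurable.lintegral_prod_right' (f := fun p : Measure X × X =>
            g (p.1 + Measure.dirac p.2) * κ p.2 (ψ + p.1)) ?_
          exact (hg.comp measurable_add_dirac).mul
            (hκmeas.comp (measurable_snd.prodMk
              ((measurable_const_add_measure ψ).comp measurable_fst)))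
        have hR : ∫⁻ μ, ∫⁻ x, f x (μ + Measure.dirac x) * kernelRestrict κ C ψ x μ ∂lam ∂Q
            = ∫⁻ μ in S m, Rg μ ∂Q := by
          have h2 : ∀ μ : Measure X,
              ∫⁻ x, f x (μ + Measure.dirac x) * kernelRestrict κ C ψ x μ ∂lam =
              Set.indicator (S m) Rg μ := by
            intro μ
            have hind : ∀ x : X, Set.indicator (S (m+1)) (fun _ => (1:ℝ≥0∞))
                (μ + Measure.dirac x) = Set.indicator (S m) (fun _ => (1:ℝ≥0∞)) μ := by
              intro x
              have hmem : (μ + Measure.dirac x) ∈ S (m+1) ↔ μ ∈ S m := by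
                simp only [hSdef, Set.mem_setOf_eq, Measure.add_apply]
                rw [Measure.dirac_apply' _ MeasurableSet.univ]
                simp only [Set.indicator_univ, Pi.one_apply]
                push_cast
                constructor
                · intro h
                  have := (ENNReal.add_left_inj ENNReal.one_ne_top).mp h
                  exact this
                · intro h; rw [h]
              by_cases h : μ ∈ S m
              · rw [Set.indicator_of_mem (hmem.mpr h), Set.indicator_of_mem h]
              · rw [Set.indicator_of_notMem (fun hh => h (hmem.mp hh)),
                  Set.indicator_of_notMem h]
            have h3 : ∀ x : X, f x (μ + Measure.dirac x) * kernelRestrict κ C ψ x μ =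
                Set.indicator (S m) (fun _ => (1:ℝ≥0∞)) μ *
                  (g (μ + Measure.dirac x) * κ x (ψ + μ) *
                    Set.indicator C (fun _ => (1:ℝ≥0∞)) x) := by
              intro x
              rw [hfdef]
              simp only []
              rw [hind x]
              unfold kernelRestrict
              ring
            rw [lintegral_congr h3, lintegral_const_mul' _ _ (by
              by_cases h : μ ∈ S m <;> simp [h])]
            have h4 : ∫⁻ x, g (μ + Measure.dirac x) * κ x (ψ + μ) *
                Set.indicator C (fun _ => (1:ℝ≥0∞)) x ∂lam = Rg μ := by
              rw [lint_mul_indicator_restrict hC fun x =>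
                g (μ + Measure.dirac x) * κ x (ψ + μ)]
            rw [h4]
            by_cases h : μ ∈ S m
            · rw [Set.indicator_of_mem h, Set.indicator_of_mem h, one_mul]
            · rw [Set.indicator_of_notMem h, Set.indicator_of_notMem h, zero_mul]
          rw [lintegral_congr h2, lintegral_indicator (hSmeas m)]
        -- combine
        have hcomb : ((m : ℝ≥0∞) + 1) * ∫⁻ μ in S (m+1), g μ ∂Q =
            c * ((m.factorial : ℝ≥0∞))⁻¹ * Bint κ ψ ν Rg m := by
          rw [← hL, hgnz, hR, ih Rg hRgmeas]
        have hBB : Bint κ ψ ν g (m+1) = Bint κ ψ ν Rg m := by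
          have := Bint_succ_eq hκmeas hcoc ψ ν
            (f := fun _ μ' => g μ') (hg.comp measurable_snd) m
          rw [← this]
          rfl
        rw [← hBB] at hcomb
        calc ∫⁻ μ in S (m+1), g μ ∂Q
            = ((m : ℝ≥0∞) + 1)⁻¹ * (((m : ℝ≥0∞) + 1) * ∫⁻ μ in S (m+1), g μ ∂Q) := by
              rw [← mul_assoc, ENNReal.inv_mul_cancel (by simp) (succ_ne_top m), one_mul]
          _ = ((m : ℝ≥0∞) + 1)⁻¹ * (c * ((m.factorial : ℝ≥0∞))⁻¹ *
                Bint κ ψ ν g (m+1)) := by rw [hcomb]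
          _ = c * (((m + 1).factorial : ℝ≥0∞))⁻¹ * Bint κ ψ ν g (m+1) :=
              inv_succ_mul m c _
  -- decomposition of Q
  have hUnull : Q (⋃ m, S m)ᶜ = 0 := by
    have hae' : ∀ᵐ μ ∂Q, ∃ n : ℕ, μ Set.univ = (n : ℝ≥0∞) :=
      hae.mono fun μ h => exists_nat_total hloc h.1 h.2
    rw [ae_iff] at hae'
    have : {μ : Measure X | ¬∃ n : ℕ, μ Set.univ = (n : ℝ≥0∞)} = (⋃ m, S m)ᶜ := by
      ext μ
      simp [hSdef]
    rw [← this]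
    exact hae'
  have hSdisj : Pairwise (Function.onFun Disjoint fun m => S m) := by
    intro i j hij
    rw [Function.onFun, Set.disjoint_left]
    intro μ hi hj
    simp only [hSdef, Set.mem_setOf_eq] at hi hj
    exact hij (Nat.cast_injective (hi ▸ hj : (i : ℝ≥0∞) = (j : ℝ≥0∞)))
  have hQA : ∀ A : Set (Measure X), MeasurableSet A →
      Q A = ∑' m, c * ((m.factorial : ℝ≥0∞))⁻¹ *
        Bint κ ψ ν (Set.indicator A fun _ => (1:ℝ≥0∞)) m := by
    intro A hA
    have hsplit : Q A = Q (A ∩ ⋃ m, S m) := by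
      rw [← measure_inter_add_diff A (MeasurableSet.iUnion hSmeas)]
      have h5 : Q (A \ ⋃ m, S m) = 0 :=
        measure_mono_null (fun μ hμ => hμ.2) hUnull
      rw [h5, add_zero]
    rw [hsplit, Set.inter_iUnion, measure_iUnion
      (fun i j hij => (hSdisj hij).mono Set.inter_subset_right Set.inter_subset_right)
      (fun m => hA.inter (hSmeas m))]
    refine tsum_congr fun m => ?_
    have : Q (A ∩ S m) = ∫⁻ μ in S m, Set.indicator A (fun _ => (1:ℝ≥0∞)) μ ∂Q := by
      rw [lintegral_indicator hA, setLIntegral_const, one_mul,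
        Measure.restrict_apply hA]
    rw [this, key m _ (measurable_const.indicator hA)]
  -- identify c
  have hAform : ∀ A : Set (Measure X), MeasurableSet A →
      Q A = c * (Set.indicator A (fun _ => (1:ℝ≥0∞)) 0 +
        ∑' m, (((m + 1).factorial : ℝ≥0∞))⁻¹ *
          Bint κ ψ ν (Set.indicator A fun _ => (1:ℝ≥0∞)) (m+1)) := by
    intro A hA
    rw [hQA A hA]
    conv_lhs => rw [tsum_eq_zero_add' ENNReal.summable]
    rw [Bint_zero]
    simp only [Nat.factorial_zero, Nat.cast_one, inv_one, mul_one]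
    rw [mul_add]
    congr 1
    rw [← ENNReal.tsum_mul_left]
    exact tsum_congr fun m => by ring
  have hZform : Q Set.univ = c * partitionZ κ lam C ψ := by
    rw [hAform Set.univ MeasurableSet.univ]
    congr 1
    unfold partitionZ
    simp only [Set.indicator_univ]
    congr 1
    refine tsum_congr fun m => ?_
    congr 1
    exact lintegral_congr fun v => one_mul _
  have h1 : c * partitionZ κ lam C ψ = 1 := by
    rw [← hZform]; exact measure_univ
  have hc0 : c ≠ 0 := by
    intro h; rw [h, zero_mul] at h1; exact zero_ne_one h1
  have hZtop : partitionZ κ lam C ψ ≠ ⊤ := by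
    intro h; rw [h, ENNReal.mul_top hc0] at h1; exact (ENNReal.top_ne_one) h1
  have hZ0 : partitionZ κ lam C ψ ≠ 0 := by
    have : (1 : ℝ≥0∞) ≤ partitionZ κ lam C ψ := le_self_add
    intro h; rw [h] at this; simp at this
  have hcZ : c = (partitionZ κ lam C ψ)⁻¹ := by
    calc c = c * (partitionZ κ lam C ψ * (partitionZ κ lam C ψ)⁻¹) := by
          rw [ENNReal.mul_inv_cancel hZ0 hZtop, mul_one]
      _ = (c * partitionZ κ lam C ψ) * (partitionZ κ lam C ψ)⁻¹ := by ring
      _ = (partitionZ κ lam C ψ)⁻¹ := by rw [h1, one_mul]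
  refine ⟨lt_top_iff_ne_top.mpr hZtop, fun A hA => ?_⟩
  rw [hAform A hA, hcZ]
  rfl

theorem finite_Gibbs_existence_iff_partitionZ_finite
    (Bseq : ℕ → Set X) (hloc : IsLocalization Bseq)
    (lam : Measure X) (hlam : ∀ j, lam (Bseq j) ≠ ⊤)
    (κ : X → Measure X → ℝ≥0∞)
    (hκmeas : Measurable fun p : X × Measure X => κ p.1 p.2)
    (hκfin : ∀ (x : X) (μ : Measure X), κ x μ ≠ ⊤)
    (hcoc : Cocycle κ)
    (C : Set X) (hC : MeasurableSet C)
    (ψ : Measure X) (hψ : IsCounting Bseq ψ) :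
    ((∃ Q : Measure (Measure X), IsProbabilityMeasure Q ∧
        IsGibbsLaw (kernelRestrict κ C ψ) lam Q ∧
        (∀ᵐ μ ∂Q, IsCounting Bseq μ ∧ μ Set.univ < ⊤))
      ↔ partitionZ κ lam C ψ < ⊤) ∧
    (∀ Q : Measure (Measure X), IsProbabilityMeasure Q →
      IsGibbsLaw (kernelRestrict κ C ψ) lam Q →
      (∀ᵐ μ ∂Q, IsCounting Bseq μ ∧ μ Set.univ < ⊤) →
      ∀ A : Set (Measure X), MeasurableSet A →
        Q A = (partitionZ κ lam C ψ)⁻¹ *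
          (Set.indicator A (fun _ => (1 : ℝ≥0∞)) (0 : Measure X)
            + ∑' m : ℕ, (((m + 1).factorial : ℝ≥0∞))⁻¹ *
                ∫⁻ v : Fin (m + 1) → X,
                  Set.indicator A (fun _ => (1 : ℝ≥0∞)) (diracSumFin v) * kappaFin κ v ψ
                ∂(Measure.pi fun _ : Fin (m + 1) => lam.restrict C))) := by
  constructor
  · constructor
    · rintro ⟨Q, hQ, hG, hae⟩
      exact (gibbs_key hloc hlam hκmeas hcoc hC ψ Q hQ hG hae).1
    · intro hZ
      exact exists_gibbs_of_partitionZ_lt hloc hlam hκmeas hcoc hC ψ hZ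
  · intro Q hQ hG hae A hA
    exact (gibbs_key hloc hlam hκmeas hcoc hC ψ Q hQ hG hae).2 A hA

end Explicit

end Gibbs
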